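/- Let A be a complete abelian category and let n, ℓ, N be nonnegative integers with n + 2 ≤ ℓ ≤ N. If G : FinSet*,≤N → A is polynomial of degree ≤ n, then the natural map from the limit of G ∘ ι over nonempty finite sets of size ≤ ℓ with surjections to G({*}) is an isomorphism. -/

import Mathlib

open CategoryTheory Limits

universe v u

/-- Skeleton of the category `FinSet*,≤N` of pointed finite sets `{*} ⊔ I` with
`|I| ≤ N`: the object `⟨m, _⟩` represents `{*} ⊔ Fin m` (`m ≤ N`); morphisms are
pointed maps, encoded as partially defined maps (`none` = basepoint). -/
structure PtdFinLe (N : ℕ) : Type where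
  n : ℕ
  hn : n ≤ N

instance {N : ℕ} : Category.{0} (PtdFinLe N) where
  Hom X Y := Fin X.n → Option (Fin Y.n)
  id X := some
  comp f g := fun i => (f i).bind g
  id_comp f := rfl
  comp_id f := by
    funext i; show (f i).bind some = f i; cases f i <;> rfl
  assoc f g h := by
    funext i
    show ((f i).bind g).bind h = (f i).bind fun j => (g j).bind h
    cases f i <;> rfl

/-- Skeleton of the category `FinSetSurj_ne,≤ℓ` of nonempty finite sets of size `≤ ℓ`
with surjective maps: the object `⟨m, _⟩` represents `Fin (m+1)` (`m + 1 ≤ ℓ`). -/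
structure SurjFinLe (l : ℕ) : Type where
  n : ℕ
  hn : n + 1 ≤ l

instance {l : ℕ} : Category.{0} (SurjFinLe l) where
  Hom X Y := {f : Fin (X.n + 1) → Fin (Y.n + 1) // Function.Surjective f}
  id X := ⟨id, Function.surjective_id⟩
  comp f g := ⟨g.1 ∘ f.1, g.2.comp f.2⟩

/-- The functor `ι : FinSetSurj_ne,≤ℓ → FinSet*,≤N`, `I ↦ {*} ⊔ I` (for `ℓ ≤ N`). -/
def iotaSurjLe {l N : ℕ} (h : l ≤ N) : SurjFinLe l ⥤ PtdFinLe N where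
  obj X := ⟨X.n + 1, le_trans X.hn h⟩
  map f := fun i => some (f.1 i)
  map_id X := rfl
  map_comp f g := rfl

/-- The pointed map `ψ_{I∖{i},I}` in `FinSet*,≤N`. -/
def psiDelLe {N m : ℕ} (h : m + 1 ≤ N) (i : Fin (m + 1)) :
    (⟨m + 1, h⟩ : PtdFinLe N) ⟶ ⟨m, le_trans (Nat.le_succ m) h⟩ :=
  ⇑(finSuccEquiv' i)

/-- `G : FinSet*,≤N → A` is polynomial of degree `≤ n`:
`∩_{i ∈ I} ker G(ψ_{I∖{i},I}) = 0` for every finite set `I` with `n < |I| ≤ N`. -/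
noncomputable def IsPolyDegLEBdd {A : Type u} [Category.{v} A] [Abelian A]
    {N : ℕ} (n : ℕ) (G : PtdFinLe N ⥤ A) : Prop :=
  ∀ (m : ℕ) (h : m + 1 ≤ N), n < m + 1 →
    (Finset.univ.inf fun i : Fin (m + 1) =>
      kernelSubobject (G.map (psiDelLe h i))) = ⊥

namespace PolyAux
open Finset

/-! ### function-level helpers -/

def killLast (c : ℕ) : Fin (c + 1) → Option (Fin c) :=
  fun j => if h : (j : ℕ) < c then some ⟨(j : ℕ), h⟩ else none

def embOf {q : ℕ} (V : Finset (Fin q)) : Fin (V.card + 1) → Option (Fin q) :=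
  fun j => if h : (j : ℕ) < V.card then some (V.orderEmbOfFin rfl ⟨(j : ℕ), h⟩) else none

def pushOpt {q p : ℕ} (θ : Fin q → Option (Fin p)) (V : Finset (Fin q)) : Finset (Fin p) :=
  V.biUnion fun y => (θ y).toFinset

lemma mem_pushOpt {q p : ℕ} {θ : Fin q → Option (Fin p)} {V : Finset (Fin q)} {z : Fin p} :
    z ∈ pushOpt θ V ↔ ∃ y ∈ V, θ y = some z := by
  simp only [pushOpt, Finset.mem_biUnion, Option.mem_toFinset, Option.mem_def]

lemma pushOpt_card_le {q p : ℕ} (θ : Fin q → Option (Fin p)) (V : Finset (Fin q)) :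
    (pushOpt θ V).card ≤ V.card := by
  refine le_trans (Finset.card_biUnion_le) ?_
  calc ∑ y ∈ V, ((θ y).toFinset).card ≤ ∑ _y ∈ V, 1 := by
        refine Finset.sum_le_sum fun y _ => ?_
        cases θ y <;> simp
    _ = V.card := by simp

lemma pushOpt_empty {q p : ℕ} (θ : Fin q → Option (Fin p)) : pushOpt θ (∅ : Finset (Fin q)) = ∅ :=
  Finset.biUnion_empty ..

lemma pushOpt_total {q p : ℕ} (f : Fin q → Fin p) (V : Finset (Fin q)) :
    pushOpt (fun y => some (f y)) V = V.image f := by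
  ext z; simp [mem_pushOpt, Finset.mem_image]

/-- merge-the-last-two map -/
def tauMerge (q : ℕ) (hq : 1 ≤ q) : Fin (q + 1) → Fin q :=
  fun j => if h : (j : ℕ) < q then ⟨(j : ℕ), h⟩ else ⟨q - 1, by omega⟩

lemma tau_castSucc {q : ℕ} (hq : 1 ≤ q) (w : Fin q) :
    tauMerge q hq (Fin.castSucc w) = w := by
  have h : ((Fin.castSucc w : Fin (q+1)) : ℕ) < q := w.isLt
  unfold tauMerge
  rw [dif_pos h]
  exact Fin.ext rfl

lemma tau_of_ne_last {q : ℕ} (hq : 1 ≤ q) {y : Fin (q + 1)} (hy : y ≠ Fin.last q) :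
    Fin.castSucc (tauMerge q hq y) = y := by
  have h : (y : ℕ) < q := Fin.val_lt_last hy
  unfold tauMerge
  rw [dif_pos h]
  exact Fin.ext rfl

lemma tau_last {q : ℕ} (hq : 1 ≤ q) :
    tauMerge q hq (Fin.last q) = ⟨q - 1, by omega⟩ := by
  simp [tauMerge]

lemma mem_erase_ne_last {q : ℕ} {t : Finset (Fin (q+1))}
    (ht : t ∈ ((univ : Finset (Fin (q+1))).erase (Fin.last q)).powerset) {y : Fin (q+1)}
    (hy : y ∈ t) : y ≠ Fin.last q :=
  (Finset.mem_erase.mp ((Finset.mem_powerset.mp ht) hy)).1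

lemma card_image_tau {q : ℕ} (hq : 1 ≤ q) {t : Finset (Fin (q+1))}
    (ht : t ∈ ((univ : Finset (Fin (q+1))).erase (Fin.last q)).powerset) :
    (t.image (tauMerge q hq)).card = t.card := by
  apply Finset.card_image_of_injOn
  intro y₁ h₁ y₂ h₂ he
  have e₁ := tau_of_ne_last hq (mem_erase_ne_last ht h₁)
  have e₂ := tau_of_ne_last hq (mem_erase_ne_last ht h₂)
  rw [← e₁, ← e₂, he]

lemma reindexE {q : ℕ} (hq : 1 ≤ q) {M : Type*} [AddCommMonoid M] (F : Finset (Fin q) → M) :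
    ∑ t ∈ ((univ : Finset (Fin (q+1))).erase (Fin.last q)).powerset,
      F (t.image (tauMerge q hq)) =
    ∑ s ∈ (univ : Finset (Fin q)).powerset, F s := by
  classical
  refine Finset.sum_nbij' (fun t => t.image (tauMerge q hq)) (fun s => s.image Fin.castSucc)
    ?_ ?_ ?_ ?_ ?_
  · intro t _; exact Finset.mem_powerset.mpr (Finset.subset_univ _)
  · intro s _
    refine Finset.mem_powerset.mpr fun z hz => ?_
    obtain ⟨w, hw, rfl⟩ := Finset.mem_image.mp hz
    exact Finset.mem_erase.mpr ⟨(Fin.castSucc_lt_last w).ne, Finset.mem_univ _⟩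
  · intro t ht
    show (t.image (tauMerge q hq)).image Fin.castSucc = t
    rw [Finset.image_image]
    ext y
    simp only [Finset.mem_image, Function.comp]
    constructor
    · rintro ⟨z, hz, rfl⟩
      rwa [tau_of_ne_last hq (mem_erase_ne_last ht hz)]
    · intro hy
      exact ⟨y, hy, tau_of_ne_last hq (mem_erase_ne_last ht hy)⟩
  · intro s _
    show (s.image Fin.castSucc).image (tauMerge q hq) = s
    rw [Finset.image_image]
    ext w
    simp only [Finset.mem_image, Function.comp]
    constructor
    · rintro ⟨z, hz, rfl⟩
      rw [tau_castSucc hq z]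
      exact hz
    · intro hw
      exact ⟨w, hw, tau_castSucc hq w⟩
  · intro t _; rfl


/-! ### category-level set-up -/

variable {A : Type u} [Category.{v} A] [Abelian A] [HasLimits A]
variable {n l N : ℕ}

def pmap {N a b : ℕ} (ha : a ≤ N) (hb : b ≤ N) (φ : Fin a → Option (Fin b)) :
    (⟨a, ha⟩ : PtdFinLe N) ⟶ ⟨b, hb⟩ := φ

lemma pmap_comp {N a b c : ℕ} (ha : a ≤ N) (hb : b ≤ N) (hc : c ≤ N)
    (f : Fin a → Option (Fin b)) (g : Fin b → Option (Fin c)) :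
    pmap ha hb f ≫ pmap hb hc g = pmap ha hc (fun i => (f i).bind g) := rfl

lemma psiDel_pmap {m : ℕ} (h : m + 1 ≤ N) (i : Fin (m+1)) :
    psiDelLe h i = pmap h (le_trans (Nat.le_succ m) h) (fun j => finSuccEquiv' i j) := rfl

variable (hlN : l ≤ N) (G : PtdFinLe N ⥤ A)

noncomputable def xel (m : ℕ) (hm : m + 1 ≤ l) :
    limit (iotaSurjLe hlN ⋙ G) ⟶ G.obj ⟨m + 1, le_trans hm hlN⟩ :=
  limit.π (iotaSurjLe hlN ⋙ G) ⟨m, hm⟩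

lemma xel_w (a b : ℕ) (ha : a + 1 ≤ l) (hb : b + 1 ≤ l)
    (τ : Fin (a + 1) → Fin (b + 1)) (hτ : Function.Surjective τ) :
    xel hlN G a ha ≫ G.map (pmap (le_trans ha hlN) (le_trans hb hlN) (fun i => some (τ i))) =
      xel hlN G b hb :=
  limit.w (iotaSurjLe hlN ⋙ G) (show (⟨a, ha⟩ : SurjFinLe l) ⟶ ⟨b, hb⟩ from ⟨τ, hτ⟩)

noncomputable def KAP (q : ℕ) (hq : q ≤ N) (V : Finset (Fin q)) (hV : V.card + 1 ≤ l) :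
    limit (iotaSurjLe hlN ⋙ G) ⟶ G.obj ⟨q, hq⟩ :=
  xel hlN G V.card hV ≫ G.map (pmap (le_trans hV hlN) hq (embOf V))

lemma KAP_congr (q : ℕ) (hq : q ≤ N) {V₁ V₂ : Finset (Fin q)} (h : V₁ = V₂)
    (h₁ : V₁.card + 1 ≤ l) (h₂ : V₂.card + 1 ≤ l) :
    KAP hlN G q hq V₁ h₁ = KAP hlN G q hq V₂ h₂ := by subst h; rfl

/-- the core canonicality lemma -/
lemma canonCore (a c : ℕ) (ha : a + 1 ≤ l) (hc : c + 1 ≤ l) (hcN : c ≤ N)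
    (g : Fin (a + 1) → Option (Fin c))
    (hsurj : ∀ w : Fin c, ∃ j, g j = some w) (j₀ : Fin (a + 1)) (hnone : g j₀ = none) :
    xel hlN G a ha ≫ G.map (pmap (le_trans ha hlN) hcN g) =
      xel hlN G c hc ≫ G.map (pmap (le_trans hc hlN) hcN (killLast c)) := by
  classical
  set τ : Fin (a + 1) → Fin (c + 1) := fun j => (g j).elim (Fin.last c) Fin.castSucc with hτdef
  have hτ : Function.Surjective τ := by
    intro w
    by_cases hw : (w : ℕ) < c
    · obtain ⟨j, hj⟩ := hsurj ⟨(w : ℕ), hw⟩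
      exact ⟨j, by simp [hτdef, hj, Fin.ext_iff]⟩
    · have : w = Fin.last c := by
        apply Fin.ext; simp only [Fin.val_last]; omega
      exact ⟨j₀, by simp [hτdef, hnone, this]⟩
  have h1 := xel_w hlN G a c ha hc τ hτ
  rw [← h1, Category.assoc, ← G.map_comp, pmap_comp]
  congr 2
  funext j
  simp only [pmap]
  rcases hgj : g j with _ | w
  · simp [hτdef, hgj, killLast]
  · have hw : ((Fin.castSucc w : Fin (c+1)) : ℕ) < c := w.isLt
    simp [hτdef, hgj, killLast, hw]

lemma embOf_last {q : ℕ} (V : Finset (Fin q)) : embOf V (Fin.last V.card) = none := by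
  simp [embOf]

/-- master evaluation: any pushforward of `xel` along a map hitting the basepoint
is the canonical element of its support -/
lemma suppEval (a : ℕ) (ha : a + 1 ≤ l) (q : ℕ) (hq : q ≤ N)
    (φ : Fin (a + 1) → Option (Fin q)) (j₀ : Fin (a + 1)) (hnone : φ j₀ = none)
    (hc : (pushOpt φ univ).card + 1 ≤ l) :
    xel hlN G a ha ≫ G.map (pmap (le_trans ha hlN) hq φ) =
      KAP hlN G q hq (pushOpt φ univ) hc := by
  classical
  set V := pushOpt φ univ with hVdef
  have hcN : V.card ≤ N := le_trans (Nat.le_succ _) (le_trans hc hlN)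
  have hmem : ∀ {j : Fin (a+1)} {y : Fin q}, φ j = some y → y ∈ V := by
    intro j y h; exact mem_pushOpt.mpr ⟨j, mem_univ j, h⟩
  have hex : ∀ {y : Fin q}, y ∈ V → ∃ w, V.orderEmbOfFin rfl w = y := by
    intro y hy
    have : y ∈ Set.range (V.orderEmbOfFin rfl) := by
      rw [range_orderEmbOfFin]; exact hy
    exact this
  set g : Fin (a + 1) → Option (Fin V.card) := fun j =>
    (φ j).bind (fun y => if h : ∃ w, V.orderEmbOfFin rfl w = y then some h.choose else none)
    with hgdef
  have hg_surj : ∀ w, ∃ j, g j = some w := by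
    intro w
    have hmw : (V.orderEmbOfFin rfl w) ∈ V := orderEmbOfFin_mem V rfl w
    obtain ⟨j, hj, hjw⟩ := mem_pushOpt.mp hmw
    refine ⟨j, ?_⟩
    have hexw : ∃ w', V.orderEmbOfFin rfl w' = V.orderEmbOfFin rfl w := ⟨w, rfl⟩
    have hch : hexw.choose = w := (V.orderEmbOfFin rfl).injective hexw.choose_spec
    simp [hgdef, hjw, dif_pos hexw, hch]
  have hg_none : g j₀ = none := by simp [hgdef, hnone]
  have hfact : pmap (le_trans ha hlN) hq φ =
      pmap (le_trans ha hlN) hcN g ≫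
        pmap hcN hq (fun w => some (V.orderEmbOfFin rfl w)) := by
    rw [pmap_comp]
    funext j
    simp only [pmap]
    rcases hφj : φ j with _ | y
    · simp [hgdef, hφj]
    · have hy : y ∈ V := hmem hφj
      have hexy : ∃ w, V.orderEmbOfFin rfl w = y := hex hy
      simp only [hgdef, hφj, Option.bind_some, dif_pos hexy]
      rw [hexy.choose_spec]
  rw [hfact, G.map_comp, ← Category.assoc]
  rw [canonCore hlN G a V.card ha hc hcN g hg_surj j₀ hg_none]
  show _ = KAP hlN G q hq V hc
  unfold KAP
  rw [Category.assoc, ← G.map_comp, pmap_comp]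
  congr 2
  funext j
  simp only [pmap]
  by_cases hj : (j : ℕ) < V.card
  · simp [killLast, embOf, hj]
  · simp [killLast, embOf, hj]

/-- pushforward of a canonical element is the canonical element of the pushed support -/
lemma Kpush (q : ℕ) (hq : q ≤ N) (V : Finset (Fin q)) (hV : V.card + 1 ≤ l)
    (p : ℕ) (hp : p ≤ N) (θ : Fin q → Option (Fin p))
    (hc : (pushOpt θ V).card + 1 ≤ l) :
    KAP hlN G q hq V hV ≫ G.map (pmap hq hp θ) = KAP hlN G p hp (pushOpt θ V) hc := by
  classical
  unfold KAP
  rw [Category.assoc, ← G.map_comp, pmap_comp]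
  have hnone : (fun i => (embOf V i).bind θ) (Fin.last V.card) = none := by
    simp [embOf_last]
  have hpush : pushOpt (fun i => (embOf V i).bind θ) univ = pushOpt θ V := by
    ext z
    simp only [mem_pushOpt]
    constructor
    · rintro ⟨j, -, hj⟩
      by_cases hlt : (j : ℕ) < V.card
      · refine ⟨V.orderEmbOfFin rfl ⟨(j : ℕ), hlt⟩, orderEmbOfFin_mem V rfl _, ?_⟩
        simpa [embOf, hlt] using hj
      · simp [embOf, hlt] at hj
    · rintro ⟨y, hy, hyz⟩
      have : y ∈ Set.range (V.orderEmbOfFin rfl) := by rw [range_orderEmbOfFin]; exact hy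
      obtain ⟨w, hw⟩ := this
      refine ⟨⟨(w : ℕ), lt_trans w.isLt (Nat.lt_succ_self _)⟩, mem_univ _, ?_⟩
      have hlt : ((⟨(w : ℕ), lt_trans w.isLt (Nat.lt_succ_self _)⟩ : Fin (V.card + 1)) : ℕ) < V.card := w.isLt
      simp only [embOf, dif_pos hlt]
      rw [show (⟨(w : ℕ), hlt⟩ : Fin V.card) = w from Fin.ext rfl, hw, Option.bind_some, hyz]
  have hc' : (pushOpt (fun i => (embOf V i).bind θ) univ).card + 1 ≤ l := by rw [hpush]; exact hc
  rw [suppEval hlN G V.card hV p hp _ (Fin.last V.card) hnone hc']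
  exact KAP_congr hlN G p hp hpush hc' hc

/-- separation from polynomiality -/
lemma sep (hG : IsPolyDegLEBdd n G) {T : A} (m : ℕ) (hm : m + 1 ≤ N) (hn : n < m + 1)
    (v : T ⟶ G.obj ⟨m + 1, hm⟩) (h : ∀ i : Fin (m+1), v ≫ G.map (psiDelLe hm i) = 0) :
    v = 0 := by
  have h2 : (Finset.univ.inf fun i : Fin (m+1) =>
      kernelSubobject (G.map (psiDelLe hm i))).Factors v := by
    rw [Subobject.finset_inf_factors]
    exact fun i _ => kernelSubobject_factors _ _ (h i)
  rw [hG m hm hn] at h2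
  exact (Subobject.bot_factors_iff_zero _).mp h2

lemma psi_none {m : ℕ} (i : Fin (m+1)) : (finSuccEquiv' i) i = none := finSuccEquiv'_at i

lemma psi_push_univ {m : ℕ} (i : Fin (m+1)) :
    pushOpt (fun j => finSuccEquiv' i j) (univ : Finset (Fin (m+1))) = univ := by
  apply Finset.eq_univ_of_forall
  intro z
  exact mem_pushOpt.mpr ⟨(finSuccEquiv' i).symm (some z), mem_univ _, Equiv.apply_symm_apply _ _⟩

lemma psi_push_insert {m : ℕ} (i : Fin (m+1)) (V : Finset (Fin (m+1))) :
    pushOpt (fun j => finSuccEquiv' i j) (insert i V) =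
      pushOpt (fun j => finSuccEquiv' i j) V := by
  unfold pushOpt
  rw [Finset.biUnion_insert]
  simp [psi_none]

lemma card_univ_fin (m : ℕ) : (univ : Finset (Fin m)).card = m := by simp

/-- image of `xel` under a collapse map -/
lemma x_psi (m : ℕ) (hm1 : m + 1 ≤ l) (hmN : m + 1 ≤ N) (i : Fin (m+1))
    (hc : (univ : Finset (Fin m)).card + 1 ≤ l) :
    xel hlN G m hm1 ≫ G.map (psiDelLe hmN i) =
      KAP hlN G m (le_trans (Nat.le_succ m) hmN) univ hc := by
  rw [psiDel_pmap]
  have hc' : (pushOpt (fun j => finSuccEquiv' i j) (univ : Finset (Fin (m+1)))).card + 1 ≤ l := by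
    rw [psi_push_univ]; exact hc
  have := suppEval hlN G m hm1 m (le_trans (Nat.le_succ m) hmN)
    (fun j => finSuccEquiv' i j) i (psi_none i) hc'
  rw [this]
  exact KAP_congr hlN G m _ (psi_push_univ i) hc' hc

/-- the generic pairing-cancellation for signed powerset sums -/
lemma pair_cancel_sum {M : Type*} [AddCommGroup M] {q : ℕ} (i : Fin q)
    (F : Finset (Fin q) → M) (m₀ : ℕ)
    (hF : ∀ t : Finset (Fin q), i ∉ t → F (insert i t) = F t) :
    ∑ V ∈ (univ : Finset (Fin q)).powerset, ((-1 : ℤ) ^ (m₀ + V.card)) • F V = 0 := by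
  classical
  rw [← Finset.insert_erase (Finset.mem_univ i),
    Finset.sum_powerset_insert (Finset.notMem_erase _ _), ← Finset.sum_add_distrib]
  refine Finset.sum_eq_zero fun t ht => ?_
  have hit : i ∉ t := fun h => Finset.notMem_erase i univ (Finset.mem_powerset.mp ht h)
  rw [Finset.card_insert_of_notMem hit, hF t hit,
    show m₀ + (t.card + 1) = (m₀ + t.card) + 1 by omega, pow_succ, mul_neg_one, neg_smul,
    add_neg_cancel]

lemma KAPbound {q : ℕ} (hql : q + 1 ≤ l) (V : Finset (Fin q)) : V.card + 1 ≤ l := by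
  have h : V.card ≤ q := by simpa using Finset.card_le_univ V
  omega

lemma KAPbound' {q : ℕ} (hql : q + 1 ≤ l) : (∅ : Finset (Fin q)).card + 1 ≤ l := by
  simp; omega

/-- (A): the top total element agrees with the full-support canonical element.
This is where `n + 2 ≤ l` is crucial. -/
lemma Astep (hnl : n + 2 ≤ l) (hG : IsPolyDegLEBdd n G) (hn1 : n + 1 ≤ l) (hq : n + 1 ≤ N) :
    xel hlN G n hn1 = KAP hlN G (n+1) hq univ (by rw [card_univ_fin]; exact hnl) := by
  rw [← sub_eq_zero]
  refine sep G hG n hq (by omega) _ fun i => ?_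
  rw [Preadditive.sub_comp]
  rw [x_psi hlN G n hn1 hq i (by rw [card_univ_fin]; exact hn1)]
  rw [psiDel_pmap, Kpush hlN G (n+1) hq univ _ n (le_trans (Nat.le_succ n) hq)
    (fun j => finSuccEquiv' i j) (by rw [psi_push_univ, card_univ_fin]; exact hn1)]
  rw [KAP_congr hlN G n (le_trans (Nat.le_succ n) hq) (psi_push_univ i) _
    (by rw [card_univ_fin]; exact hn1)]
  exact sub_self _

/-- (B): the cross-effect identity at level `n+1`. -/
lemma Bident (hnl : n + 2 ≤ l) (hG : IsPolyDegLEBdd n G) (hn1 : n + 1 ≤ l) (hq : n + 1 ≤ N) :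
    xel hlN G n hn1 =
      ∑ V ∈ ((univ : Finset (Fin (n+1))).powerset.erase univ),
        ((-1 : ℤ) ^ (n + V.card)) • KAP hlN G (n+1) hq V (KAPbound hnl V) := by
  classical
  rw [← sub_eq_zero]
  refine sep G hG n hq (by omega) _ fun i => ?_
  rw [Preadditive.sub_comp]
  rw [x_psi hlN G n hn1 hq i (by rw [card_univ_fin]; exact hn1)]
  rw [Preadditive.sum_comp]
  have hterm : ∀ V ∈ ((univ : Finset (Fin (n+1))).powerset.erase univ),
      (((-1 : ℤ) ^ (n + V.card)) • KAP hlN G (n+1) hq V (KAPbound hnl V)) ≫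
          G.map (psiDelLe hq i) =
        ((-1 : ℤ) ^ (n + V.card)) • KAP hlN G n (le_trans (Nat.le_succ n) hq)
          (pushOpt (fun j => finSuccEquiv' i j) V)
          (KAPbound hn1 (pushOpt (fun j => finSuccEquiv' i j) V)) := by
    intro V _
    rw [Preadditive.zsmul_comp, psiDel_pmap,
      Kpush hlN G (n+1) hq V _ n (le_trans (Nat.le_succ n) hq) (fun j => finSuccEquiv' i j)
        (KAPbound hn1 _)]
  rw [Finset.sum_congr rfl hterm]
  have hfull : ∑ V ∈ (univ : Finset (Fin (n+1))).powerset,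
      ((-1 : ℤ) ^ (n + V.card)) • KAP hlN G n (le_trans (Nat.le_succ n) hq)
        (pushOpt (fun j => finSuccEquiv' i j) V)
        (KAPbound hn1 (pushOpt (fun j => finSuccEquiv' i j) V)) = 0 := by
    refine pair_cancel_sum i _ n fun t hit => ?_
    exact KAP_congr hlN G n _ (psi_push_insert i t) _ _
  have herase := Finset.sum_erase_add ((univ : Finset (Fin (n+1))).powerset)
    (fun V => ((-1 : ℤ) ^ (n + V.card)) • KAP hlN G n (le_trans (Nat.le_succ n) hq)
        (pushOpt (fun j => finSuccEquiv' i j) V)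
        (KAPbound hn1 (pushOpt (fun j => finSuccEquiv' i j) V)))
    (Finset.mem_powerset_self univ)
  rw [hfull] at herase
  have h2 := eq_neg_of_add_eq_zero_left herase
  rw [h2]
  rw [KAP_congr hlN G n (le_trans (Nat.le_succ n) hq) (psi_push_univ i) _
    (by rw [card_univ_fin]; exact hn1)]
  have hsign : ((-1 : ℤ)) ^ (n + (univ : Finset (Fin (n+1))).card) = -1 := by
    rw [card_univ_fin]; exact Odd.neg_one_pow ⟨n, by ring⟩
  rw [hsign, neg_one_zsmul, neg_neg, sub_self]

/-- the Euler relation at the top level `n+1` -/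
lemma EQtop (hnl : n + 2 ≤ l) (hG : IsPolyDegLEBdd n G) (hq : n + 1 ≤ N) :
    ∑ V ∈ (univ : Finset (Fin (n+1))).powerset,
      ((-1 : ℤ) ^ V.card) • KAP hlN G (n+1) hq V (KAPbound hnl V) = 0 := by
  classical
  have hn1 : n + 1 ≤ l := by omega
  have hsgn : ∀ c : ℕ, ((-1 : ℤ)) ^ c = (-1) ^ n * (-1) ^ (n + c) := by
    intro c
    rw [pow_add, ← mul_assoc, ← pow_add]
    have he : Even (n + n) := ⟨n, rfl⟩
    rw [he.neg_one_pow, one_mul]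
  rw [← Finset.sum_erase_add ((univ : Finset (Fin (n+1))).powerset)
    (fun V => ((-1 : ℤ) ^ V.card) • KAP hlN G (n+1) hq V (KAPbound hnl V))
    (Finset.mem_powerset_self univ)]
  show _ + ((-1 : ℤ) ^ ((univ : Finset (Fin (n+1)))).card) •
    KAP hlN G (n+1) hq univ (KAPbound hnl univ) = 0
  have hpart : ∑ V ∈ ((univ : Finset (Fin (n+1))).powerset.erase univ),
      ((-1 : ℤ) ^ V.card) • KAP hlN G (n+1) hq V (KAPbound hnl V)
      = (-1 : ℤ) ^ n • xel hlN G n hn1 := by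
    rw [Bident hlN G hnl hG hn1 hq, Finset.smul_sum]
    exact Finset.sum_congr rfl fun V hV => by rw [smul_smul, ← hsgn]
  rw [hpart, Astep hlN G hnl hG hn1 hq]
  have hpe : ((-1 : ℤ)) ^ ((univ : Finset (Fin (n+1)))).card = -(-1 : ℤ) ^ n := by
    rw [card_univ_fin, pow_succ, mul_neg_one]
  rw [hpe, neg_smul]
  have hKeq : KAP hlN G (n+1) hq univ (by rw [card_univ_fin]; exact hnl) =
      KAP hlN G (n+1) hq univ (KAPbound hnl univ) := rfl
  rw [hKeq, add_neg_cancel]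

/-- the descent step for the Euler relation -/
lemma EQstep (q : ℕ) (h1 : 1 ≤ q) (hqN : q ≤ N) (hqN' : q + 1 ≤ N)
    (hql : q + 1 ≤ l) (hql' : q + 2 ≤ l)
    (hprev : ∑ V ∈ (univ : Finset (Fin (q+1))).powerset,
      ((-1 : ℤ) ^ V.card) • KAP hlN G (q+1) hqN' V (KAPbound hql' V) = 0) :
    ∑ V ∈ (univ : Finset (Fin q)).powerset,
      ((-1 : ℤ) ^ V.card) • KAP hlN G q hqN V (KAPbound hql V) = 0 := by
  classical
  set jb : Fin q := ⟨q - 1, by omega⟩ with hjb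
  have h0 : (∑ V ∈ (univ : Finset (Fin (q+1))).powerset,
      ((-1 : ℤ) ^ V.card) • KAP hlN G (q+1) hqN' V (KAPbound hql' V)) ≫
        G.map (pmap hqN' hqN (fun j => some (tauMerge q h1 j))) = 0 := by
    rw [hprev, Limits.zero_comp]
  rw [Preadditive.sum_comp] at h0
  have hterm : ∀ V ∈ (univ : Finset (Fin (q+1))).powerset,
      (((-1 : ℤ) ^ V.card) • KAP hlN G (q+1) hqN' V (KAPbound hql' V)) ≫
          G.map (pmap hqN' hqN (fun j => some (tauMerge q h1 j))) =
        ((-1 : ℤ) ^ V.card) • KAP hlN G q hqN (V.image (tauMerge q h1))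
          (KAPbound hql (V.image (tauMerge q h1))) := by
    intro V _
    rw [Preadditive.zsmul_comp,
      Kpush hlN G (q+1) hqN' V _ q hqN (fun j => some (tauMerge q h1 j))
        (by rw [pushOpt_total]; exact KAPbound hql _)]
    congr 1
    exact KAP_congr hlN G q hqN (pushOpt_total _ _) _ _
  rw [Finset.sum_congr rfl hterm] at h0
  rw [show (univ : Finset (Fin (q+1))) =
      insert (Fin.last q) ((univ : Finset (Fin (q+1))).erase (Fin.last q)) from
      (Finset.insert_erase (Finset.mem_univ _)).symm,
    Finset.sum_powerset_insert (Finset.notMem_erase _ _)] at h0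
  -- second summand
  have hsnd : ∑ t ∈ ((univ : Finset (Fin (q+1))).erase (Fin.last q)).powerset,
      ((-1 : ℤ) ^ (insert (Fin.last q) t).card) •
        KAP hlN G q hqN ((insert (Fin.last q) t).image (tauMerge q h1))
          (KAPbound hql ((insert (Fin.last q) t).image (tauMerge q h1))) = 0 := by
    have heach : ∀ t ∈ ((univ : Finset (Fin (q+1))).erase (Fin.last q)).powerset,
        ((-1 : ℤ) ^ (insert (Fin.last q) t).card) •
          KAP hlN G q hqN ((insert (Fin.last q) t).image (tauMerge q h1))
            (KAPbound hql ((insert (Fin.last q) t).image (tauMerge q h1))) =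
        -(((-1 : ℤ) ^ (t.image (tauMerge q h1)).card) •
          KAP hlN G q hqN (insert jb (t.image (tauMerge q h1)))
            (KAPbound hql (insert jb (t.image (tauMerge q h1))))) := by
      intro t ht
      have hlast : Fin.last q ∉ t := fun h =>
        (mem_erase_ne_last ht h) rfl
      rw [Finset.card_insert_of_notMem hlast, card_image_tau h1 ht, pow_succ, mul_neg_one,
        neg_smul, Finset.image_insert, tau_last h1]
    rw [Finset.sum_congr rfl heach, Finset.sum_neg_distrib]
    rw [reindexE h1 (fun s => ((-1 : ℤ) ^ s.card) •
      KAP hlN G q hqN (insert jb s) (KAPbound hql (insert jb s)))]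
    rw [neg_eq_zero]
    have := pair_cancel_sum (q := q) jb
      (fun s => KAP hlN G q hqN (insert jb s) (KAPbound hql (insert jb s))) 0
      (fun t _ => KAP_congr hlN G q hqN (Finset.insert_idem jb t) _ _)
    simpa using this
  rw [hsnd, add_zero] at h0
  -- first summand
  have hfst : ∑ t ∈ ((univ : Finset (Fin (q+1))).erase (Fin.last q)).powerset,
      ((-1 : ℤ) ^ t.card) • KAP hlN G q hqN (t.image (tauMerge q h1))
        (KAPbound hql (t.image (tauMerge q h1))) =
      ∑ s ∈ (univ : Finset (Fin q)).powerset,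
        ((-1 : ℤ) ^ s.card) • KAP hlN G q hqN s (KAPbound hql s) := by
    rw [← reindexE h1 (fun s => ((-1 : ℤ) ^ s.card) • KAP hlN G q hqN s (KAPbound hql s))]
    exact Finset.sum_congr rfl fun t ht => by rw [card_image_tau h1 ht]
  rw [← hfst]
  exact h0

/-- the Euler relation at every level `1 ≤ q ≤ n+1` -/
lemma EQzero (hnl : n + 2 ≤ l) (hG : IsPolyDegLEBdd n G) (q : ℕ) (h1 : 1 ≤ q)
    (h2 : q ≤ n + 1) (hqN : q ≤ N) (hql : q + 1 ≤ l) :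
    ∑ V ∈ (univ : Finset (Fin q)).powerset,
      ((-1 : ℤ) ^ V.card) • KAP hlN G q hqN V (KAPbound hql V) = 0 := by
  obtain ⟨k, hk⟩ : ∃ k, q + k = n + 1 := ⟨n + 1 - q, by omega⟩
  induction k generalizing q with
  | zero =>
    have : q = n + 1 := by omega
    subst this
    exact EQtop hlN G hnl hG hqN
  | succ k IH =>
    refine EQstep hlN G q h1 hqN (by omega) hql (by omega) ?_
    exact IH (q + 1) (by omega) (by omega) (by omega) (by omega) (by omega)

lemma neg_one_pow_smul_inj {M : Type*} [AddCommGroup M] {k : ℕ} {x y : M}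
    (h : ((-1 : ℤ) ^ k) • x = ((-1 : ℤ) ^ k) • y) : x = y := by
  have h2 := congrArg (fun z => ((-1 : ℤ) ^ k) • z) h
  simp only [smul_smul, ← pow_add] at h2
  rwa [Even.neg_one_pow ⟨k, rfl⟩, one_smul, one_smul] at h2

/-- every canonical element with support of size `≤ n+1`, hence every canonical
element, is the base-point element -/
lemma Gamma (hnl : n + 2 ≤ l) (hG : IsPolyDegLEBdd n G) :
    ∀ c q (hq : q ≤ N) (V : Finset (Fin q)) (hV : V.card + 1 ≤ l), V.card = c →
      KAP hlN G q hq V hV =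
        KAP hlN G q hq ∅ (by simpa using (show (1:ℕ) ≤ l by omega)) := by
  intro c
  induction c using Nat.strong_induction_on with
  | _ c IHc =>
    intro q
    induction q using Nat.strong_induction_on with
    | _ q IHq =>
      intro hq V hV hVc
      rcases Nat.lt_or_ge c q with hcq | hcq
      · -- lateral move: q > c, V proper, push down one level
        have hVne : V ≠ univ := by
          intro h
          rw [h, card_univ_fin] at hVc
          omega
        obtain ⟨z, hz⟩ : ∃ z, z ∉ V := by
          by_contra h
          push_neg at h
          exact hVne (Finset.eq_univ_iff_forall.mpr h)
        obtain ⟨q', rfl⟩ : ∃ q', q = q' + 1 := ⟨q - 1, by omega⟩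
        set W : Finset (Fin q') := univ.filter (fun w => z.succAbove w ∈ V) with hWdef
        have himg : W.image (z.succAbove) = V := by
          ext u
          simp only [Finset.mem_image, hWdef, Finset.mem_filter, Finset.mem_univ, true_and]
          constructor
          · rintro ⟨w, hw, rfl⟩; exact hw
          · intro hu
            obtain ⟨w, hw⟩ := Fin.exists_succAbove_eq (show u ≠ z from fun h => hz (h ▸ hu))
            exact ⟨w, by rw [hw]; exact hu, hw⟩
        have hcard : W.card = c := by
          rw [← hVc, ← himg]
          exact (Finset.card_image_of_injective _ (Fin.succAbove_right_injective)).symm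
        have hWb : W.card + 1 ≤ l := by
          rw [hcard, ← hVc]; exact hV
        have hpush : pushOpt (fun w => some (z.succAbove w)) W = V := by
          rw [pushOpt_total]; exact himg
        have hK := Kpush hlN G q' (by omega) W hWb (q'+1) hq (fun w => some (z.succAbove w))
          (by rw [hpush]; exact hV)
        rw [KAP_congr hlN G (q'+1) hq hpush _ hV] at hK
        rw [← hK, IHq q' (by omega) (by omega) W hWb hcard,
          Kpush hlN G q' (by omega) ∅ _ (q'+1) hq (fun w => some (z.succAbove w))
            (by rw [pushOpt_empty]; simpa using (show (1:ℕ) ≤ l by omega))]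
        exact KAP_congr hlN G (q'+1) hq (pushOpt_empty _) _ _
      · -- base of the lateral move: q = c and V = univ
        have hqc : q = c := by
          have : V.card ≤ q := by simpa using Finset.card_le_univ V
          omega
        subst hqc
        have hVuniv : V = univ := by
          apply Finset.eq_univ_of_card
          rw [hVc]
          simp
        have hub : (univ : Finset (Fin q)).card + 1 ≤ l := by
          rw [card_univ_fin, ← hVc]; exact hV
        rw [KAP_congr hlN G q hq hVuniv hV hub]
        rcases Nat.eq_zero_or_pos q with hq0 | hq1
        · subst hq0
          exact KAP_congr hlN G 0 hq (Finset.univ_eq_empty) hub _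
        have hql : q + 1 ≤ l := by rw [card_univ_fin] at hub; exact hub
        rcases Nat.lt_or_ge (n+1) q with hbig | hsmall
        · -- large level: separation
          obtain ⟨m, rfl⟩ : ∃ m, q = m + 1 := ⟨q - 1, by omega⟩
          rw [← sub_eq_zero]
          refine sep G hG m hq (by omega) _ fun i => ?_
          rw [Preadditive.sub_comp, psiDel_pmap,
            Kpush hlN G (m+1) hq univ hub m (le_trans (Nat.le_succ m) hq)
              (fun j => finSuccEquiv' i j)
              (by rw [psi_push_univ, card_univ_fin]; omega),
            Kpush hlN G (m+1) hq ∅ _ m (le_trans (Nat.le_succ m) hq)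
              (fun j => finSuccEquiv' i j)
              (by rw [pushOpt_empty]; simpa using (show (1:ℕ) ≤ l by omega)),
            KAP_congr hlN G m (le_trans (Nat.le_succ m) hq) (psi_push_univ i) _
              (by rw [card_univ_fin]; omega),
            KAP_congr hlN G m (le_trans (Nat.le_succ m) hq) (pushOpt_empty _) _
              (by simpa using (show (1:ℕ) ≤ l by omega)),
            IHc m (by omega) m (le_trans (Nat.le_succ m) hq) univ
              (by rw [card_univ_fin]; omega) (card_univ_fin m)]
          exact sub_self _
        · -- small level: the Euler relation
          haveI : Nonempty (Fin q) := ⟨⟨0, hq1⟩⟩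
          have hEQ := EQzero hlN G hnl hG q hq1 hsmall hq hql
          have hsplit := Finset.sum_erase_add ((univ : Finset (Fin q)).powerset)
            (fun W => ((-1 : ℤ) ^ W.card) • KAP hlN G q hq W (KAPbound hql W))
            (Finset.mem_powerset_self univ)
          rw [hEQ] at hsplit
          have hterm : ∀ W ∈ ((univ : Finset (Fin q)).powerset.erase univ),
              ((-1 : ℤ) ^ W.card) • KAP hlN G q hq W (KAPbound hql W) =
                ((-1 : ℤ) ^ W.card) •
                  KAP hlN G q hq ∅ (by simpa using (show (1:ℕ) ≤ l by omega)) := by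
            intro W hW
            have hWne : W ≠ univ := (Finset.mem_erase.mp hW).1
            have hWle : W.card ≤ q := by simpa using Finset.card_le_univ W
            have hWlt : W.card < q := by
              rcases Nat.lt_or_ge W.card q with h | h
              · exact h
              · exfalso
                refine hWne (Finset.eq_univ_of_card W ?_)
                simp; omega
            rw [IHc W.card hWlt q hq W (KAPbound hql W) rfl]
          rw [Finset.sum_congr rfl hterm, ← Finset.sum_smul] at hsplit
          have hsigns : ∑ W ∈ ((univ : Finset (Fin q)).powerset.erase univ),
              ((-1 : ℤ) ^ W.card) = -(-1 : ℤ) ^ q := by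
            have h0 : ∑ W ∈ (univ : Finset (Fin q)).powerset, ((-1 : ℤ) ^ W.card) = 0 :=
              Finset.sum_powerset_neg_one_pow_card_of_nonempty Finset.univ_nonempty
            have hsp := Finset.sum_erase_add ((univ : Finset (Fin q)).powerset)
              (fun W => ((-1 : ℤ) ^ W.card)) (Finset.mem_powerset_self univ)
            rw [h0] at hsp
            have hsp2 : (∑ W ∈ ((univ : Finset (Fin q)).powerset.erase univ),
                ((-1 : ℤ) ^ W.card)) + (-1 : ℤ) ^ ((univ : Finset (Fin q)).card) = 0 := hsp
            rw [card_univ_fin] at hsp2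
            linarith
          rw [hsigns, neg_smul] at hsplit
          have hsplit2 : -(((-1 : ℤ) ^ q) •
              KAP hlN G q hq ∅ (by simpa using (show (1:ℕ) ≤ l by omega))) +
              ((-1 : ℤ) ^ ((univ : Finset (Fin q)).card)) •
                KAP hlN G q hq univ (KAPbound hql univ) = 0 := hsplit
          rw [card_univ_fin] at hsplit2
          have h3 := neg_add_eq_zero.mp hsplit2
          exact neg_one_pow_smul_inj h3.symm

/-- every limit-cone component is the base-point element -/
lemma Xlem (hnl : n + 2 ≤ l) (hG : IsPolyDegLEBdd n G) :
    ∀ k m (hm : m + 1 ≤ l), n ≤ m + k →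
      xel hlN G m hm = KAP hlN G (m+1) (le_trans hm hlN) ∅
        (by simpa using (show (1:ℕ) ≤ l by omega)) := by
  have hbig : ∀ m (hm : m + 1 ≤ l), n ≤ m →
      xel hlN G m hm = KAP hlN G (m+1) (le_trans hm hlN) ∅
        (by simpa using (show (1:ℕ) ≤ l by omega)) := by
    intro m hm hnm
    rw [← sub_eq_zero]
    refine sep G hG m (le_trans hm hlN) (by omega) _ fun i => ?_
    rw [Preadditive.sub_comp,
      x_psi hlN G m hm (le_trans hm hlN) i (by rw [card_univ_fin]; omega),
      psiDel_pmap,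
      Kpush hlN G (m+1) (le_trans hm hlN) ∅ _ m
        (le_trans (Nat.le_succ m) (le_trans hm hlN)) (fun j => finSuccEquiv' i j)
        (by rw [pushOpt_empty]; simpa using (show (1:ℕ) ≤ l by omega)),
      KAP_congr hlN G m (le_trans (Nat.le_succ m) (le_trans hm hlN)) (pushOpt_empty _) _
        (by simpa using (show (1:ℕ) ≤ l by omega)),
      Gamma hlN G hnl hG m m (le_trans (Nat.le_succ m) (le_trans hm hlN)) univ
        (by rw [card_univ_fin]; omega) (card_univ_fin m)]
    exact sub_self _
  intro k
  induction k with
  | zero =>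
    intro m hm hnm
    exact hbig m hm (by omega)
  | succ k IH =>
    intro m hm hnm
    rcases le_or_gt n m with hcase | hcase
    · exact hbig m hm hcase
    · have hm1 : (m + 1) + 1 ≤ l := by omega
      have hτ : Function.Surjective (tauMerge (m+1) (by omega)) := by
        intro w
        refine ⟨Fin.castSucc w, tau_castSucc _ w⟩
      have hw := xel_w hlN G (m+1) m hm1 hm (tauMerge (m+1) (by omega)) hτ
      rw [← hw, IH (m+1) hm1 (by omega),
        Kpush hlN G (m+2) (le_trans hm1 hlN) ∅ _ (m+1) (le_trans hm hlN)
          (fun j => some (tauMerge (m+1) (by omega) j))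
          (by rw [pushOpt_empty]; simpa using (show (1:ℕ) ≤ l by omega))]
      exact KAP_congr hlN G (m+1) (le_trans hm hlN) (pushOpt_empty _) _ _

lemma pushOpt_allnone {a q : ℕ} :
    pushOpt (fun _ : Fin a => (none : Option (Fin q))) univ = ∅ := by
  ext z
  simp [mem_pushOpt]

end PolyAux

open PolyAux in
/-- Vanishing of finite limits of polynomial functors: for a complete abelian
category `A`, nonnegative integers `n + 2 ≤ ℓ ≤ N`, and a polynomial functor
`G : FinSet*,≤N → A` of degree `≤ n`, the natural map
`lim_{I ∈ FinSetSurj_ne,≤ℓ} G({*} ⊔ I) → G({*})` is an isomorphism. -/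
theorem finite_limit_of_polynomial_functor_is_trivial
    {A : Type u} [Category.{v} A] [Abelian A] [HasLimits A]
    {n l N : ℕ} (hnl : n + 2 ≤ l) (hlN : l ≤ N)
    (G : PtdFinLe N ⥤ A) (hG : IsPolyDegLEBdd n G) :
    IsIso (limit.π (iotaSurjLe hlN ⋙ G) ⟨0, by omega⟩ ≫
      G.map (show (⟨1, by omega⟩ : PtdFinLe N) ⟶ ⟨0, by omega⟩ from fun _ => none)) := by
  classical
  have h1l : (1:ℕ) ≤ l := by omega
  have h0N : (0:ℕ) ≤ N := by omega
  let c : Limits.Cone (iotaSurjLe hlN ⋙ G) :=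
    { pt := G.obj ⟨0, h0N⟩
      π := { app := fun J => G.map (pmap h0N (le_trans J.hn hlN) (fun i => i.elim0))
             naturality := by
               intro J J' f
               simp only [Functor.const_obj_obj, Functor.const_obj_map, Category.id_comp,
                 Functor.comp_map]
               erw [← G.map_comp]
               congr 1
               funext i
               exact i.elim0 } }
  let s : G.obj ⟨0, h0N⟩ ⟶ limit (iotaSurjLe hlN ⋙ G) := limit.lift _ c
  have hbnd : (pushOpt (fun _ : Fin 1 => (none : Option (Fin 0)))
      (Finset.univ : Finset (Fin 1))).card + 1 ≤ l := by
    rw [pushOpt_allnone]; simpa using h1l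
  have hf : (limit.π (iotaSurjLe hlN ⋙ G) ⟨0, by omega⟩ ≫
      G.map (show (⟨1, by omega⟩ : PtdFinLe N) ⟶ ⟨0, by omega⟩ from fun _ => none)) =
      KAP hlN G 0 h0N ∅ (by simpa using h1l) := by
    have h := suppEval hlN G 0 h1l 0 h0N (fun _ => none) ⟨0, by omega⟩ rfl hbnd
    have h2 : (limit.π (iotaSurjLe hlN ⋙ G) ⟨0, by omega⟩ ≫
        G.map (show (⟨1, by omega⟩ : PtdFinLe N) ⟶ ⟨0, by omega⟩ from fun _ => none)) =
        KAP hlN G 0 h0N (pushOpt (fun _ : Fin 1 => (none : Option (Fin 0)))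
          (Finset.univ : Finset (Fin 1))) hbnd := h
    rw [h2]
    exact KAP_congr hlN G 0 h0N pushOpt_allnone hbnd (by simpa using h1l)
  rw [hf]
  have hcomp1 : KAP hlN G 0 h0N ∅ (by simpa using h1l) ≫ s = 𝟙 _ := by
    apply limit.hom_ext
    intro J
    rw [Category.assoc, limit.lift_π, Category.id_comp]
    obtain ⟨m, hm⟩ := J
    show KAP hlN G 0 h0N ∅ _ ≫
      G.map (pmap h0N (le_trans hm hlN) (fun i => i.elim0)) = _
    rw [Kpush hlN G 0 h0N ∅ _ (m+1) (le_trans hm hlN) (fun i => i.elim0)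
        (by rw [pushOpt_empty]; simpa using h1l),
      KAP_congr hlN G (m+1) (le_trans hm hlN) (pushOpt_empty _) _
        (by simpa using h1l)]
    exact (Xlem hlN G hnl hG n m hm (by omega)).symm
  have hcomp2 : s ≫ KAP hlN G 0 h0N ∅ (by simpa using h1l) = 𝟙 _ := by
    have hcard0 : (∅ : Finset (Fin 0)).card + 1 ≤ l := by simpa using h1l
    have hs : s ≫ xel hlN G (∅ : Finset (Fin 0)).card hcard0 =
        G.map (pmap h0N (le_trans hcard0 hlN) (fun i => i.elim0)) :=
      limit.lift_π c ⟨(∅ : Finset (Fin 0)).card, hcard0⟩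
    show s ≫ (xel hlN G (∅ : Finset (Fin 0)).card hcard0 ≫
      G.map (pmap (le_trans hcard0 hlN) h0N (embOf (∅ : Finset (Fin 0))))) = 𝟙 _
    rw [← Category.assoc, hs, ← G.map_comp,
      show (pmap h0N (le_trans hcard0 hlN) (fun i : Fin 0 => i.elim0) ≫
          pmap (le_trans hcard0 hlN) h0N (embOf (∅ : Finset (Fin 0)))) =
        𝟙 (⟨0, h0N⟩ : PtdFinLe N) from funext fun i => i.elim0]
    exact G.map_id _
  exact ⟨s, hcomp1, hcomp2⟩
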